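/- Any set of n ≥ 3 points in the unit cube [0,1]^3 contains three points forming a triangle of area at most C · n^{-2/3} for an absolute constant C. -/

import Mathlib

open Metric Set

noncomputable section

abbrev E3 := EuclideanSpace ℝ (Fin 3)

def unitCube3 : Set E3 := {x | ∀ i, x i ∈ Icc (0 : ℝ) 1}

def triArea (a b c : E3) : ℝ :=
  (1 / 2) * ‖(EuclideanSpace.equiv (Fin 3) ℝ).symm
      (crossProduct ((EuclideanSpace.equiv (Fin 3) ℝ) (b - a))
        ((EuclideanSpace.equiv (Fin 3) ℝ) (c - a)))‖

/-- If two points of `[0,1]` land in the same cell of the `k`-grid, they are within `1/k`. -/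
lemma coord_close (k : ℕ) (hk : 0 < k) {x y : ℝ} (hx : x ∈ Icc (0:ℝ) 1) (hy : y ∈ Icc (0:ℝ) 1)
    (h : min ⌊(k:ℝ) * x⌋₊ (k-1) = min ⌊(k:ℝ) * y⌋₊ (k-1)) : |x - y| ≤ 1 / k := by
  have kpos : (0:ℝ) < k := by exact_mod_cast hk
  have key : ∀ z : ℝ, z ∈ Icc (0:ℝ) 1 →
      ((min ⌊(k:ℝ) * z⌋₊ (k-1) : ℕ) : ℝ) / k ≤ z ∧
        z ≤ ((min ⌊(k:ℝ) * z⌋₊ (k-1) : ℕ) + 1) / k := by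
    intro z hz
    set j : ℕ := min ⌊(k:ℝ) * z⌋₊ (k-1) with hj
    have hnn : (0:ℝ) ≤ (k:ℝ) * z := mul_nonneg (le_of_lt kpos) hz.1
    constructor
    · rw [div_le_iff₀ kpos]
      have h1 : (j:ℝ) ≤ ⌊(k:ℝ) * z⌋₊ := by exact_mod_cast Nat.min_le_left _ _
      have h2 : (⌊(k:ℝ) * z⌋₊ : ℝ) ≤ (k:ℝ) * z := Nat.floor_le hnn
      linarith [mul_comm z (k:ℝ)]
    · rw [le_div_iff₀ kpos]
      rcases le_or_gt ⌊(k:ℝ) * z⌋₊ (k-1) with hc | hc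
      · have hjj : j = ⌊(k:ℝ) * z⌋₊ := min_eq_left hc
        have := Nat.lt_floor_add_one ((k:ℝ) * z)
        rw [hjj]
        linarith [mul_comm z (k:ℝ)]
      · have hjj : j = k - 1 := min_eq_right (le_of_lt hc)
        have hk1 : ((k:ℝ) - 1) + 1 = k := by ring
        have : (j:ℝ) = (k:ℝ) - 1 := by
          rw [hjj]; push_cast [Nat.cast_sub hk]; ring
        have hz1 : z * k ≤ k := by nlinarith [hz.2]
        linarith
  obtain ⟨hx1, hx2⟩ := key x hx
  obtain ⟨hy1, hy2⟩ := key y hy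
  rw [h] at hx1 hx2
  rw [abs_le]
  constructor <;> [skip; skip] <;>
  · have : ((min ⌊(k:ℝ) * y⌋₊ (k-1) : ℕ) + 1) / (k:ℝ) - ((min ⌊(k:ℝ) * y⌋₊ (k-1) : ℕ)) / k
        = 1 / k := by field_simp; ring
    linarith

/-- Area bound from coordinate-wise closeness. -/
lemma area_bound (a b c : E3) (d : ℝ) (hd : 0 ≤ d)
    (hb : ∀ i, |b i - a i| ≤ d) (hc : ∀ i, |c i - a i| ≤ d) :
    triArea a b c ≤ Real.sqrt 3 * d ^ 2 := by
  set u : Fin 3 → ℝ := (EuclideanSpace.equiv (Fin 3) ℝ) (b - a) with hu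
  set w : Fin 3 → ℝ := (EuclideanSpace.equiv (Fin 3) ℝ) (c - a) with hw
  have hui : ∀ i, |u i| ≤ d := by
    intro i; have : u i = b i - a i := by simp [hu, EuclideanSpace.equiv]
    rw [this]; exact hb i
  have hwi : ∀ i, |w i| ≤ d := by
    intro i; have : w i = c i - a i := by simp [hw, EuclideanSpace.equiv]
    rw [this]; exact hc i
  have hcomp : ∀ i, ((crossProduct u w) i) ^ 2 ≤ 4 * d ^ 4 := by
    intro i
    have habs : |(crossProduct u w) i| ≤ 2 * d ^ 2 := by
      fin_cases i <;>
      · simp only [cross_apply, Matrix.cons_val_zero, Matrix.cons_val_one, Matrix.head_cons,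
          Matrix.cons_val_two, Matrix.tail_cons]
        calc |_| ≤ _ := abs_sub _ _
        _ ≤ 2 * d ^ 2 := by
            rw [abs_mul, abs_mul]
            nlinarith [hui 0, hui 1, hui 2, hwi 0, hwi 1, hwi 2, abs_nonneg (u 0),
              abs_nonneg (u 1), abs_nonneg (u 2), abs_nonneg (w 0), abs_nonneg (w 1),
              abs_nonneg (w 2)]
    nlinarith [abs_nonneg ((crossProduct u w) i), sq_abs ((crossProduct u w) i)]
  have hnorm : ‖(EuclideanSpace.equiv (Fin 3) ℝ).symm (crossProduct u w)‖
      ≤ 2 * Real.sqrt 3 * d ^ 2 := by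
    have h1 : ‖(EuclideanSpace.equiv (Fin 3) ℝ).symm (crossProduct u w)‖
        = Real.sqrt (∑ i, ((crossProduct u w) i) ^ 2) := by
      rw [EuclideanSpace.norm_eq]
      simp [EuclideanSpace.equiv, Real.norm_eq_abs, sq_abs]
    rw [h1]
    have hsum : (∑ i, ((crossProduct u w) i) ^ 2) ≤ 12 * d ^ 4 := by
      rw [Fin.sum_univ_three]
      linarith [hcomp 0, hcomp 1, hcomp 2]
    calc Real.sqrt (∑ i, ((crossProduct u w) i) ^ 2) ≤ Real.sqrt (12 * d ^ 4) :=
          Real.sqrt_le_sqrt hsum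
      _ = 2 * Real.sqrt 3 * d ^ 2 := by
          rw [show (12 : ℝ) * d ^ 4 = (2 * Real.sqrt 3 * d ^ 2) ^ 2 by
            have h3 : Real.sqrt 3 ^ 2 = 3 := Real.sq_sqrt (by norm_num)
            nlinarith]
          exact Real.sqrt_sq (by positivity)
  unfold triArea
  rw [← hu, ← hw]
  linarith

/-- Any `n ≥ 3` points in `[0,1]³` contain three points spanning a triangle
of area at most `C · n^{-2/3}` for an absolute constant `C`. -/
theorem stmt2 :
    ∃ C > 0, ∀ (n : ℕ), 3 ≤ n → ∀ P : Finset E3, P.card = n →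
      (∀ p ∈ P, p ∈ unitCube3) →
      ∃ a ∈ P, ∃ b ∈ P, ∃ c ∈ P, a ≠ b ∧ a ≠ c ∧ b ≠ c ∧
        triArea a b c ≤ C * (n : ℝ) ^ (-(2 : ℝ) / 3) := by
  refine ⟨100, by norm_num, ?_⟩
  intro n hn P hcard hP
  classical
  have hn0 : (0:ℝ) < n := by positivity
  set y : ℝ := ((n:ℝ)/3) ^ ((1:ℝ)/3) with hy
  have hy1 : (1:ℝ) ≤ y := by
    apply Real.one_le_rpow
    · rw [le_div_iff₀ (by norm_num : (0:ℝ) < 3)]; exact_mod_cast by linarith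
    · norm_num
  set k : ℕ := ⌊y⌋₊ with hk
  have hk1 : 1 ≤ k := Nat.le_floor (by exact_mod_cast hy1)
  have hkpos : 0 < k := hk1
  have hkR : (0:ℝ) < k := by exact_mod_cast hkpos
  -- k³ ≤ n/3
  have hky : (k:ℝ) ≤ y := Nat.floor_le (by linarith)
  have hy3 : y ^ 3 = (n:ℝ)/3 := by
    rw [hy, ← Real.rpow_natCast (((n:ℝ)/3) ^ ((1:ℝ)/3)) 3, ← Real.rpow_mul (by positivity)]
    norm_num
  have hk3 : (k:ℝ) ^ 3 ≤ (n:ℝ)/3 := by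
    rw [← hy3]; exact pow_le_pow_left₀ (by positivity) hky 3
  have hcount : (2 : ℕ) * k ^ 3 < n := by
    have : 2 * ((k:ℝ) ^ 3) < n := by linarith
    exact_mod_cast this
  -- pigeonhole
  set f : E3 → (Fin 3 → Fin k) := fun p i =>
    ⟨min ⌊(k:ℝ) * p i⌋₊ (k-1), lt_of_le_of_lt (Nat.min_le_right _ _) (by omega)⟩ with hf
  have hmaps : ∀ p ∈ P, f p ∈ (Finset.univ : Finset (Fin 3 → Fin k)) := fun _ _ =>
    Finset.mem_univ _
  have hcard' : (Finset.univ : Finset (Fin 3 → Fin k)).card * 2 < P.card := by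
    rw [hcard, Finset.card_univ, Fintype.card_fun]
    simpa [Fintype.card_fin, mul_comm] using hcount
  obtain ⟨y0, -, hy0⟩ :=
    Finset.exists_lt_card_fiber_of_mul_lt_card_of_maps_to hmaps hcard'
  have h3 : 3 ≤ (P.filter fun p => f p = y0).card := hy0
  obtain ⟨s, hs, hscard⟩ := Finset.exists_subset_card_eq h3
  obtain ⟨a, b, c, hab, hac, hbc, hseq⟩ := Finset.card_eq_three.1 hscard
  have hmem : ∀ p ∈ ({a, b, c} : Finset E3), p ∈ P ∧ f p = y0 := by
    intro p hp
    have := hs (hseq ▸ hp)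
    simp only [Finset.mem_filter] at this
    exact this
  have haP := hmem a (by simp)
  have hbP := hmem b (by simp)
  have hcP := hmem c (by simp)
  refine ⟨a, haP.1, b, hbP.1, c, hcP.1, hab, hac, hbc, ?_⟩
  -- coordinate closeness
  have hclose : ∀ p q : E3, p ∈ P → f p = y0 → q ∈ P → f q = y0 →
      ∀ i, |q i - p i| ≤ 1 / k := by
    intro p q hp hfp hq hfq i
    rw [abs_sub_comm]
    apply coord_close k hkpos (hP p hp i) (hP q hq i)
    have := congrFun hfp i
    rw [← congrFun hfq i] at this
    exact congrArg Fin.val this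
  have harea : triArea a b c ≤ Real.sqrt 3 * (1/k) ^ 2 :=
    area_bound a b c (1/k) (by positivity)
      (hclose a b haP.1 haP.2 hbP.1 hbP.2)
      (hclose a c haP.1 haP.2 hcP.1 hcP.2)
  -- arithmetic
  have hxval : (n:ℝ) ^ ((1:ℝ)/3) = (3:ℝ) ^ ((1:ℝ)/3) * y := by
    rw [hy, ← Real.mul_rpow (by norm_num) (by positivity)]
    congr 1; field_simp
  set x : ℝ := (n:ℝ) ^ ((1:ℝ)/3) with hx
  have hxpos : 0 < x := Real.rpow_pos_of_pos hn0 _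
  have h3le : (3:ℝ) ^ ((1:ℝ)/3) ≤ 3 := by
    calc (3:ℝ) ^ ((1:ℝ)/3) ≤ (3:ℝ) ^ (1:ℝ) :=
          Real.rpow_le_rpow_of_exponent_le (by norm_num) (by norm_num)
      _ = 3 := Real.rpow_one 3
  have hyk : y ≤ 2 * k := by
    rcases le_or_gt y 2 with h | h
    · have : (1:ℝ) ≤ k := by exact_mod_cast hk1
      linarith
    · have := Nat.sub_one_lt_floor y
      rw [← hk] at this
      linarith
  have hx6k : x ≤ 6 * k := by
    rw [hxval]
    calc (3:ℝ) ^ ((1:ℝ)/3) * y ≤ 3 * y := by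
          apply mul_le_mul_of_nonneg_right h3le (by linarith)
      _ ≤ 6 * k := by linarith
  have hx2 : x ^ 2 ≤ 36 * (k:ℝ) ^ 2 := by nlinarith
  have hrw : (n:ℝ) ^ (-(2:ℝ)/3) = (x ^ 2)⁻¹ := by
    rw [hx, ← Real.rpow_natCast ((n:ℝ) ^ ((1:ℝ)/3)) 2, ← Real.rpow_mul (le_of_lt hn0),
      ← Real.rpow_neg (le_of_lt hn0)]
    norm_num
  rw [hrw]
  have hsqrt3 : Real.sqrt 3 ≤ 2 := by
    rw [show (2:ℝ) = Real.sqrt 4 by rw [show (4:ℝ) = 2^2 by norm_num, Real.sqrt_sq]; norm_num]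
    exact Real.sqrt_le_sqrt (by norm_num)
  have hfinal : Real.sqrt 3 * (1/(k:ℝ)) ^ 2 ≤ 100 * (x ^ 2)⁻¹ := by
    rw [show Real.sqrt 3 * (1/(k:ℝ)) ^ 2 = Real.sqrt 3 / (k:ℝ) ^ 2 by ring,
      show (100:ℝ) * (x ^ 2)⁻¹ = 100 / x ^ 2 by ring,
      div_le_div_iff₀ (by positivity) (by positivity)]
    nlinarith [Real.sqrt_nonneg 3, sq_nonneg x]
  linarith

end
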